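/- Let X be a cubic surface in P^3 given by x_3·x_2·x_0 + x_0·x_1^2 + x_1^2·x_3 = 0 (equivalently x_0x_2x_3 + x_0^2x_1 + x_1^2x_3 = 0 after coordinate relabeling). Then X contains exactly four lines, namely {x_0 = x_1 = 0}, {x_1 = x_3 = 0}, {x_1 = x_2 = 0}, and {x_0 = x_3 = 0}. -/

import Mathlib

/-- The cubic form `x₀x₂x₃ + x₀²x₁ + x₁²x₃` on `k⁴`, whose projective zero locus is
the cubic surface `X ⊂ ℙ³`. -/
def cubicA4A1 {k : Type*} [Field k] (v : Fin 4 → k) : k :=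
  v 0 * v 2 * v 3 + v 0 ^ 2 * v 1 + v 1 ^ 2 * v 3


open Module

-- product of three linear forms vanishing identically
lemma caseA {k : Type*} [Field k] [CharZero k] (a0 b0 a2 b2 a3 b3 : k)
    (h : ∀ t : k, (a0 + t * b0) * (a2 + t * b2) * (a3 + t * b3) = 0) :
    (a0 = 0 ∧ b0 = 0) ∨ (a2 = 0 ∧ b2 = 0) ∨ (a3 = 0 ∧ b3 = 0) := by
  classical
  by_contra hc
  push_neg at hc
  obtain ⟨h0, h2, h3⟩ := hc
  obtain ⟨t, ht⟩ := Infinite.exists_notMem_finset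
    ({-a0 / b0, -a2 / b2, -a3 / b3} : Finset k)
  simp only [Finset.mem_insert, Finset.mem_singleton, not_or] at ht
  obtain ⟨ht0, ht2, ht3⟩ := ht
  have key : ∀ a b : k, (a = 0 → b ≠ 0) → t ≠ -a / b → a + t * b ≠ 0 := by
    intro a b hab htab heq
    rcases eq_or_ne b 0 with hb | hb
    · have ha : a = 0 := by simpa [hb] using heq
      exact hab ha hb
    · apply htab
      field_simp
      linear_combination heq
  have := h t
  rcases mul_eq_zero.1 this with h' | h'
  · rcases mul_eq_zero.1 h' with h'' | h''
    · exact key a0 b0 h0 ht0 h''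
    · exact key a2 b2 h2 ht2 h''
  · exact key a3 b3 h3 ht3 h'

lemma caseB {k : Type*} [Field k] [CharZero k] (a c d p q r : k)
    (hnz : ¬(p = 0 ∧ q = 0 ∧ r = 0))
    (h : ∀ t : k, (a + t * p) * (c + t * q) * (d + t * r)
        + (a + t * p) ^ 2 + (d + t * r) = 0) :
    a = 0 ∧ d = 0 ∧ p = 0 ∧ r = 0 := by
  have h0 := h 0
  have h1 := h 1
  have hm1 := h (-1)
  have h2 := h 2
  -- coefficient equations
  have E0 : a * c * d + a ^ 2 + d = 0 := by linear_combination h0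
  have E1 : a * c * r + a * q * d + p * c * d + 2 * a * p + r = 0 := by
    linear_combination h1 - (1/3 : k) * hm1 - (1/6 : k) * h2 - (1/2 : k) * h0
  have E2 : a * q * r + p * q * d + p * c * r + p ^ 2 = 0 := by
    linear_combination (1/2 : k) * h1 + (1/2 : k) * hm1 - h0
  have E3 : p * q * r = 0 := by
    linear_combination (1/6 : k) * h2 + (1/2 : k) * h0 - (1/2 : k) * h1 - (1/6 : k) * hm1

  rcases eq_or_ne p 0 with hp | hp
  · subst hp
    rcases eq_or_ne a 0 with ha | ha
    · subst ha
      have hr : r = 0 := by linear_combination E1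
      have hd : d = 0 := by linear_combination E0
      exact ⟨rfl, hd, rfl, hr⟩
    · have hqr : q * r = 0 := mul_left_cancel₀ ha (by linear_combination E2)
      rcases mul_eq_zero.1 hqr with hq | hr
      · subst hq
        rcases eq_or_ne r 0 with hr | hr
        · exact absurd ⟨rfl, rfl, hr⟩ hnz
        · have hac : a * c = -1 := mul_left_cancel₀ hr (by linear_combination E1)
          have ha2 : a ^ 2 = 0 := by linear_combination E0 - d * hac
          exact absurd (pow_eq_zero_iff two_ne_zero |>.1 ha2) ha
      · subst hr
        rcases eq_or_ne q 0 with hq | hq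
        · exact absurd ⟨rfl, hq, rfl⟩ hnz
        · have hd : d = 0 :=
            mul_left_cancel₀ (mul_ne_zero ha hq) (by linear_combination E1)
          have ha2 : a ^ 2 = 0 := by linear_combination E0 - (a * c + 1) * hd
          exact absurd (pow_eq_zero_iff two_ne_zero |>.1 ha2) ha
  · have hqr : q * r = 0 := mul_left_cancel₀ hp (by linear_combination E3)
    rcases mul_eq_zero.1 hqr with hq | hr
    · subst hq
      have hcr : c * r = -p := mul_left_cancel₀ hp (by linear_combination E2)
      have hr : r ≠ 0 := by
        intro h; subst h
        exact hp (by linear_combination hcr)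
      have hY : a * c + c ^ 2 * d = 1 :=
        mul_left_cancel₀ hr (by linear_combination -E1 + (c * d + 2 * a) * hcr)
      exact absurd (by linear_combination c ^ 2 * E0 - (a * c + 1) * hY : (1:k) = 0)
        one_ne_zero
    · subst hr
      have hqd : q * d = -p := mul_left_cancel₀ hp (by linear_combination E2)
      have hq0 : q ≠ 0 := by
        intro h; subst h; exact hp (by linear_combination hqd)
      have hd0 : d ≠ 0 := by
        intro h; subst h; exact hp (by linear_combination hqd)
      have ha : a + c * d = 0 :=
        mul_left_cancel₀ (mul_ne_zero hq0 hd0)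
          (by linear_combination -E1 + (c * d + 2 * a) * hqd)
      exact absurd (by linear_combination E0 - a * ha : d = 0) hd0

open Module Submodule

def coordPlane (k : Type*) [Field k] (i j : Fin 4) : Submodule k (Fin 4 → k) where
  carrier := {v | v i = 0 ∧ v j = 0}
  add_mem' := by
    rintro x y ⟨hx1, hx2⟩ ⟨hy1, hy2⟩
    exact ⟨by simp [hx1, hy1], by simp [hx2, hy2]⟩
  zero_mem' := ⟨rfl, rfl⟩
  smul_mem' := by
    rintro c x ⟨h1, h2⟩
    exact ⟨by simp [h1], by simp [h2]⟩

lemma mem_coordPlane {k : Type*} [Field k] {i j : Fin 4} {v : Fin 4 → k} :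
    v ∈ coordPlane k i j ↔ v i = 0 ∧ v j = 0 := Iff.rfl

lemma finrank_coordPlane {k : Type*} [Field k] (i j : Fin 4) (hij : i ≠ j) :
    Module.finrank k (coordPlane k i j) = 2 := by
  set f : (Fin 4 → k) →ₗ[k] k × k := (LinearMap.proj i).prod (LinearMap.proj j) with hf
  have hker : LinearMap.ker f = coordPlane k i j := by
    ext v
    simp [hf, LinearMap.mem_ker, Prod.ext_iff, mem_coordPlane]
  have hsurj : Function.Surjective f := by
    rintro ⟨x, y⟩
    refine ⟨Pi.single i x + Pi.single j y, ?_⟩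
    simp [hf, Prod.ext_iff, Pi.single_apply, hij, hij.symm]
  have h1 := LinearMap.finrank_range_add_finrank_ker f
  rw [LinearMap.range_eq_top.2 hsurj, hker] at h1
  have h2 : Module.finrank k (⊤ : Submodule k (k × k)) = 2 := by
    simp [finrank_top]
  have h3 : Module.finrank k (Fin 4 → k) = 4 := by
    simp
  omega

lemma mainB {k : Type*} [Field k] [CharZero k] (W : Submodule k (Fin 4 → k))
    (hF : ∀ v ∈ W, cubicA4A1 v = 0) (u w : Fin 4 → k) (hu : u ∈ W) (hw : w ∈ W)
    (hind : ∀ s t : k, s • u + t • w = 0 → s = 0 ∧ t = 0) (hu1 : u 1 ≠ 0) :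
    u 0 = 0 ∧ u 3 = 0 ∧ w 0 = 0 ∧ w 3 = 0 := by
  set u' : Fin 4 → k := (u 1)⁻¹ • u with hu'
  set w' : Fin 4 → k := w - (w 1) • u' with hw'
  have hu'W : u' ∈ W := W.smul_mem _ hu
  have hw'W : w' ∈ W := W.sub_mem hw (W.smul_mem _ hu'W)
  have hu'1 : u' 1 = 1 := by
    simp [hu', inv_mul_cancel₀ hu1]
  have hw'1 : w' 1 = 0 := by
    simp [hw', hu'1]
  have key : ∀ t : k, (u' 0 + t * w' 0) * (u' 2 + t * w' 2) * (u' 3 + t * w' 3)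
      + (u' 0 + t * w' 0) ^ 2 + (u' 3 + t * w' 3) = 0 := by
    intro t
    have h := hF (u' + t • w') (W.add_mem hu'W (W.smul_mem t hw'W))
    simp only [cubicA4A1, Pi.add_apply, Pi.smul_apply, smul_eq_mul, hu'1, hw'1] at h
    linear_combination h
  have hnz : ¬(w' 0 = 0 ∧ w' 2 = 0 ∧ w' 3 = 0) := by
    rintro ⟨h0, h2, h3⟩
    have hw0 : w' = 0 := by
      funext i
      fin_cases i
      · exact h0
      · exact hw'1
      · exact h2
      · exact h3
    have hcomb : (w 1 * (u 1)⁻¹) • u + (-1 : k) • w = 0 := by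
      have : w - (w 1) • ((u 1)⁻¹ • u) = 0 := hw0
      funext i
      have := congrFun this i
      simp only [Pi.add_apply, Pi.smul_apply, Pi.sub_apply, smul_eq_mul, Pi.zero_apply]
        at this ⊢
      linear_combination -this
    have := (hind _ _ hcomb).2
    norm_num at this
  obtain ⟨ha, hd, hp, hr⟩ := caseB (u' 0) (u' 2) (u' 3) (w' 0) (w' 2) (w' 3) hnz key
  have hu0 : u 0 = 0 := by
    have : (u 1)⁻¹ * u 0 = 0 := by simpa [hu'] using ha
    rcases mul_eq_zero.1 this with h | h
    · exact absurd h (inv_ne_zero hu1)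
    · exact h
  have hu3 : u 3 = 0 := by
    have : (u 1)⁻¹ * u 3 = 0 := by simpa [hu'] using hd
    rcases mul_eq_zero.1 this with h | h
    · exact absurd h (inv_ne_zero hu1)
    · exact h
  have hw0 : w 0 = 0 := by
    have h' : w 0 - w 1 * ((u 1)⁻¹ * u 0) = 0 := by simpa [hw', hu'] using hp
    rw [hu0] at h'
    simpa using h'
  have hw3 : w 3 = 0 := by
    have h' : w 3 - w 1 * ((u 1)⁻¹ * u 3) = 0 := by simpa [hw', hu'] using hr
    rw [hu3] at h'
    simpa using h'
  exact ⟨hu0, hu3, hw0, hw3⟩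


/-- the cubic surface `X = {x₀x₂x₃ + x₀²x₁ + x₁²x₃ = 0} ⊂ ℙ³` contains
exactly four lines, namely `{x₀ = x₁ = 0}`, `{x₁ = x₃ = 0}`, `{x₁ = x₂ = 0}` and
`{x₀ = x₃ = 0}`.  Here a line in `ℙ³` is (the projectivization of) a two-dimensional
linear subspace `W` of `k⁴`, and it lies on `X` iff the cubic form vanishes on `W`. -/
theorem stmt_3 (k : Type*) [Field k] [IsAlgClosed k] [CharZero k]
    (W : Submodule k (Fin 4 → k)) :
    (Module.finrank k W = 2 ∧ ∀ v ∈ W, cubicA4A1 v = 0) ↔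
      ((W : Set (Fin 4 → k)) = {v | v 0 = 0 ∧ v 1 = 0} ∨
       (W : Set (Fin 4 → k)) = {v | v 1 = 0 ∧ v 3 = 0} ∨
       (W : Set (Fin 4 → k)) = {v | v 1 = 0 ∧ v 2 = 0} ∨
       (W : Set (Fin 4 → k)) = {v | v 0 = 0 ∧ v 3 = 0}) := by
  constructor
  · rintro ⟨hdim, hF⟩
    let b : Basis (Fin 2) k W := Module.finBasisOfFinrankEq k W hdim
    set u : Fin 4 → k := ((b 0 : W) : Fin 4 → k) with hu_def
    set w : Fin 4 → k := ((b 1 : W) : Fin 4 → k) with hw_def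
    have hu : u ∈ W := (b 0).2
    have hw : w ∈ W := (b 1).2
    have hrepr : ∀ x ∈ W, ∃ s t : k, s • u + t • w = x := by
      intro x hx
      refine ⟨b.repr ⟨x, hx⟩ 0, b.repr ⟨x, hx⟩ 1, ?_⟩
      have h2 := congrArg (Subtype.val : W → (Fin 4 → k)) (b.sum_repr ⟨x, hx⟩)
      simp only [Fin.sum_univ_two, Submodule.coe_add, Submodule.coe_smul] at h2
      exact h2
    have hind : ∀ s t : k, s • u + t • w = 0 → s = 0 ∧ t = 0 := by
      intro s t hst
      have hcoe : ((∑ i, ![s, t] i • b i : W) : Fin 4 → k) = s • u + t • w := by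
        simp only [Fin.sum_univ_two, Submodule.coe_add, Submodule.coe_smul,
          Matrix.cons_val_zero, Matrix.cons_val_one, Matrix.head_cons]
        rfl
      have hzero : (∑ i, ![s, t] i • b i : W) = 0 := by
        have hz : ((∑ i, ![s, t] i • b i : W) : Fin 4 → k) = ((0 : W) : Fin 4 → k) := by
          rw [hcoe, hst]; rfl
        exact Subtype.coe_injective hz
      have hli := Fintype.linearIndependent_iff.1 b.linearIndependent ![s, t] hzero
      exact ⟨hli 0, hli 1⟩
    have step : ∀ i j : Fin 4, i ≠ j → u ∈ coordPlane k i j → w ∈ coordPlane k i j →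
        (W : Set (Fin 4 → k)) = {v | v i = 0 ∧ v j = 0} := by
      intro i j hij hui hwi
      have hle : W ≤ coordPlane k i j := by
        intro x hx
        obtain ⟨s, t, rfl⟩ := hrepr x hx
        exact add_mem (Submodule.smul_mem _ _ hui) (Submodule.smul_mem _ _ hwi)
      have hWQ : W = coordPlane k i j :=
        Submodule.eq_of_le_of_finrank_le hle
          (by rw [finrank_coordPlane i j hij, hdim])
      rw [hWQ]; rfl
    by_cases h1 : u 1 = 0
    · by_cases h2 : w 1 = 0
      · have keyA : ∀ t : k,
            (u 0 + t * w 0) * (u 2 + t * w 2) * (u 3 + t * w 3) = 0 := by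
          intro t
          have h := hF (u + t • w) (W.add_mem hu (W.smul_mem t hw))
          simp only [cubicA4A1, Pi.add_apply, Pi.smul_apply, smul_eq_mul, h1, h2] at h
          linear_combination h
        rcases caseA (u 0) (w 0) (u 2) (w 2) (u 3) (w 3) keyA with
          ⟨ha, hb⟩ | ⟨ha, hb⟩ | ⟨ha, hb⟩
        · exact Or.inl (step 0 1 (by decide) ⟨ha, h1⟩ ⟨hb, h2⟩)
        · exact Or.inr (Or.inr (Or.inl (step 1 2 (by decide) ⟨h1, ha⟩ ⟨h2, hb⟩)))
        · exact Or.inr (Or.inl (step 1 3 (by decide) ⟨h1, ha⟩ ⟨h2, hb⟩))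
      · have hind' : ∀ s t : k, s • w + t • u = 0 → s = 0 ∧ t = 0 := by
          intro s t hst
          exact (hind t s (by rwa [add_comm] at hst)).symm
        obtain ⟨hw0, hw3, hu0, hu3⟩ := mainB W hF w u hw hu hind' h2
        exact Or.inr (Or.inr (Or.inr (step 0 3 (by decide) ⟨hu0, hu3⟩ ⟨hw0, hw3⟩)))
    · obtain ⟨hu0, hu3, hw0, hw3⟩ := mainB W hF u w hu hw hind h1
      exact Or.inr (Or.inr (Or.inr (step 0 3 (by decide) ⟨hu0, hu3⟩ ⟨hw0, hw3⟩)))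
  · rintro (h | h | h | h)
    · have hW : W = coordPlane k 0 1 := SetLike.ext' (by rw [h]; rfl)
      refine ⟨by rw [hW]; exact finrank_coordPlane 0 1 (by decide), ?_⟩
      intro v hv
      rw [hW] at hv
      obtain ⟨e1, e2⟩ := hv
      simp [cubicA4A1, e1, e2]
    · have hW : W = coordPlane k 1 3 := SetLike.ext' (by rw [h]; rfl)
      refine ⟨by rw [hW]; exact finrank_coordPlane 1 3 (by decide), ?_⟩
      intro v hv
      rw [hW] at hv
      obtain ⟨e1, e2⟩ := hv
      simp [cubicA4A1, e1, e2]
    · have hW : W = coordPlane k 1 2 := SetLike.ext' (by rw [h]; rfl)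
      refine ⟨by rw [hW]; exact finrank_coordPlane 1 2 (by decide), ?_⟩
      intro v hv
      rw [hW] at hv
      obtain ⟨e1, e2⟩ := hv
      simp [cubicA4A1, e1, e2]
    · have hW : W = coordPlane k 0 3 := SetLike.ext' (by rw [h]; rfl)
      refine ⟨by rw [hW]; exact finrank_coordPlane 0 3 (by decide), ?_⟩
      intro v hv
      rw [hW] at hv
      obtain ⟨e1, e2⟩ := hv
      simp [cubicA4A1, e1, e2]
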